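/- Let λ ≠ 0, and for i = 1,…,n let αᵢ(t) = (cᵢ/λ)sin(λt + dᵢ) + hᵢ, α_{n+i}(t) = (−cᵢ/λ)cos(λt + dᵢ) + h_{n+i}, and α_{2n+1}(t) = 2t cos θ + Σᵢ [ (−cᵢ²/(4λ²))(2(λt+dᵢ) + sin(2(λt+dᵢ))) + (cᵢh_{n+i}/λ)sin(λt+dᵢ) ] + h_{2n+1}, with Σᵢ cᵢ² = 4sin²θ. Then α'_{2n+1}(t) = 2cos θ + Σᵢ α'ᵢ(t)·α_{n+i}(t) and Σ_{i=1}^{2n} (α'ᵢ(t))² = 4 sin²θ for all t. -/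

import Mathlib

open scoped BigOperators

lemma hdu (lam dd t : ℝ) : HasDerivAt (fun t : ℝ => lam * t + dd) lam t := by
  simpa using ((hasDerivAt_id t).const_mul lam).add_const dd

lemma hdA (cc lam dd hh t : ℝ) :
    HasDerivAt (fun t : ℝ => cc / lam * Real.sin (lam * t + dd) + hh)
      (cc / lam * (Real.cos (lam * t + dd) * lam)) t := by
  exact (((hdu lam dd t).sin).const_mul (cc / lam)).add_const hh

lemma hdB (cc lam dd hh t : ℝ) :
    HasDerivAt (fun t : ℝ => -cc / lam * Real.cos (lam * t + dd) + hh)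
      (-cc / lam * (-Real.sin (lam * t + dd) * lam)) t := by
  exact (((hdu lam dd t).cos).const_mul (-cc / lam)).add_const hh

lemma hdZterm (cc lam dd hh t : ℝ) :
    HasDerivAt (fun t : ℝ => -cc ^ 2 / (4 * lam ^ 2) *
        (2 * (lam * t + dd) + Real.sin (2 * (lam * t + dd))) +
        cc * hh / lam * Real.sin (lam * t + dd))
      (-cc ^ 2 / (4 * lam ^ 2) *
        (2 * lam + Real.cos (2 * (lam * t + dd)) * (2 * lam)) +
        cc * hh / lam * (Real.cos (lam * t + dd) * lam)) t := by
  have h2u : HasDerivAt (fun t : ℝ => 2 * (lam * t + dd)) (2 * lam) t := by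
    simpa using (hdu lam dd t).const_mul 2
  exact ((((hdu lam dd t).const_mul 2).add h2u.sin).const_mul (-cc ^ 2 / (4 * lam ^ 2))).add
    (((hdu lam dd t).sin).const_mul (cc * hh / lam))

theorem magnetic_curve_parametrization_nonzero_lambda
    (n : ℕ) (θ lam : ℝ) (hlam : lam ≠ 0)
    (c d h₁ h₂ : Fin n → ℝ) (hlast : ℝ)
    (hc : ∑ i, (c i) ^ 2 = 4 * Real.sin θ ^ 2) :
    let A : Fin n → ℝ → ℝ := fun i t =>
      c i / lam * Real.sin (lam * t + d i) + h₁ i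
    let B : Fin n → ℝ → ℝ := fun i t =>
      -(c i) / lam * Real.cos (lam * t + d i) + h₂ i
    let Z : ℝ → ℝ := fun t =>
      2 * t * Real.cos θ +
        (∑ i, (-(c i) ^ 2 / (4 * lam ^ 2) *
            (2 * (lam * t + d i) + Real.sin (2 * (lam * t + d i))) +
          c i * h₂ i / lam * Real.sin (lam * t + d i))) + hlast
    ∀ t : ℝ,
      deriv Z t = 2 * Real.cos θ + ∑ i, deriv (A i) t * B i t ∧
        (∑ i, ((deriv (A i) t) ^ 2 + (deriv (B i) t) ^ 2)) =
          4 * Real.sin θ ^ 2 := by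
  intro A B Z t
  have dA : ∀ i, deriv (A i) t = c i * Real.cos (lam * t + d i) := by
    intro i
    rw [(hdA (c i) lam (d i) (h₁ i) t).deriv]
    field_simp
  have dB : ∀ i, deriv (B i) t = c i * Real.sin (lam * t + d i) := by
    intro i
    rw [(hdB (c i) lam (d i) (h₂ i) t).deriv]
    field_simp
  have hZ : HasDerivAt Z
      (2 * Real.cos θ + ∑ i, (-(c i) ^ 2 / (4 * lam ^ 2) *
        (2 * lam + Real.cos (2 * (lam * t + d i)) * (2 * lam)) +
        c i * h₂ i / lam * (Real.cos (lam * t + d i) * lam))) t := by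
    have hsum : HasDerivAt (fun t : ℝ => ∑ i, (-(c i) ^ 2 / (4 * lam ^ 2) *
        (2 * (lam * t + d i) + Real.sin (2 * (lam * t + d i))) +
        c i * h₂ i / lam * Real.sin (lam * t + d i)))
        (∑ i, (-(c i) ^ 2 / (4 * lam ^ 2) *
        (2 * lam + Real.cos (2 * (lam * t + d i)) * (2 * lam)) +
        c i * h₂ i / lam * (Real.cos (lam * t + d i) * lam))) t := by
      exact HasDerivAt.fun_sum fun i _ => hdZterm (c i) lam (d i) (h₂ i) t
    have h1 : HasDerivAt (fun t : ℝ => 2 * t * Real.cos θ) (2 * Real.cos θ) t := by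
      simpa [mul_assoc, mul_comm] using
        ((hasDerivAt_id t).const_mul (2 * Real.cos θ))
    exact (h1.add hsum).add_const hlast
  constructor
  · rw [hZ.deriv]
    congr 1
    apply Finset.sum_congr rfl
    intro i _
    rw [dA i]
    show _ = c i * Real.cos (lam * t + d i) * (-(c i) / lam * Real.cos (lam * t + d i) + h₂ i)
    rw [Real.cos_two_mul]
    field_simp
    ring
  · have : ∀ i, (deriv (A i) t) ^ 2 + (deriv (B i) t) ^ 2 = c i ^ 2 := by
      intro i
      rw [dA i, dB i]
      have := Real.sin_sq_add_cos_sq (lam * t + d i)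
      nlinarith [this]
    simp_rw [this]
    exact hc
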